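/- Fix n ≥ 1, set p = n·2^n + 1. Given nonnegative integers x_0,…,x_{n−1} < 2^n and y_i, z_i ∈ {0,…,p−1} with y_i + z_i ≡ x_i (mod p), define Y_i = y_i·8^n + 8^i, Z_i = z_i·8^n + 2·8^i, W_i = 3·8^i, and let U' = {Y_i, Z_i, W_i : 0 ≤ i ≤ n−1} (as a multiset). Then the multiset {x_0,…,x_{n−1}} has a partition into two parts of equal sum if and only if U' has a partition into two parts C', D' with Σ C' ≡ Σ D' (mod p·8^n). -/

import Mathlib

lemma digits_unique :
    ∀ (n : ℕ) (c d : ℕ → ℕ), (∀ i, c i < 8) → (∀ i, d i < 8) →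
    (∑ i ∈ Finset.range n, c i * 8 ^ i) = (∑ i ∈ Finset.range n, d i * 8 ^ i) →
    ∀ i < n, c i = d i := by
  intro n
  induction n with
  | zero => intro c d _ _ _ i hi; omega
  | succ m ih =>
    intro c d hc hd hsum i hi
    rw [Finset.sum_range_succ', Finset.sum_range_succ'] at hsum
    have h1 : ∀ (f : ℕ → ℕ), ∑ j ∈ Finset.range m, f (j+1) * (8:ℕ) ^ (j+1)
        = (∑ j ∈ Finset.range m, f (j+1) * 8 ^ j) * 8 := by
      intro f
      rw [Finset.sum_mul]
      exact Finset.sum_congr rfl (fun j _ => by rw [pow_succ, mul_assoc])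
    rw [h1 c, h1 d] at hsum
    simp only [pow_zero, mul_one] at hsum
    have hc8 := hc 0
    have hd8 := hd 0
    have hc0 : c 0 = d 0 := by omega
    have hs : (∑ j ∈ Finset.range m, c (j+1) * (8:ℕ) ^ j) = ∑ j ∈ Finset.range m, d (j+1) * 8 ^ j := by
      omega
    rcases Nat.eq_zero_or_pos i with rfl | hip
    · exact hc0
    · have := ih (fun j => c (j+1)) (fun j => d (j+1)) (fun j => hc _) (fun j => hd _) hs (i-1) (by omega)
      simpa [Nat.sub_add_cancel hip] using this

lemma geom_bound (c : ℕ → ℕ) (hc : ∀ i, c i < 8) (n : ℕ) :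
    ∑ i ∈ Finset.range n, c i * 8 ^ i < 8 ^ n := by
  induction n with
  | zero => simp
  | succ m ih =>
    rw [Finset.sum_range_succ, pow_succ]
    have := hc m
    have h8 : 0 < (8:ℕ)^m := Nat.pow_pos (by norm_num)
    nlinarith



/-- With `p = n·2^n + 1`, `x_i < 2^n`, `y_i, z_i < p`,
`y_i + z_i ≡ x_i (mod p)`, `Y_i = y_i·8^n + 8^i`, `Z_i = z_i·8^n + 2·8^i`,
`W_i = 3·8^i`, the multiset `{x_i}` has a partition into two parts of equal sum
iff the multiset `U' = {Y_i, Z_i, W_i}` has a partition into two parts `C', D'`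
with `Σ C' ≡ Σ D' (mod p·8^n)`. -/
theorem stmt4 (n : ℕ) (hn : 1 ≤ n) (x y z : Fin n → ℕ)
    (hx : ∀ i, x i < 2 ^ n)
    (hy : ∀ i, y i < n * 2 ^ n + 1) (hz : ∀ i, z i < n * 2 ^ n + 1)
    (hyz : ∀ i, y i + z i ≡ x i [MOD n * 2 ^ n + 1])
    (Y Z W : Fin n → ℕ)
    (hY : ∀ i, Y i = y i * 8 ^ n + 8 ^ (i : ℕ))
    (hZ : ∀ i, Z i = z i * 8 ^ n + 2 * 8 ^ (i : ℕ))
    (hW : ∀ i, W i = 3 * 8 ^ (i : ℕ)) :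
    (∃ P : Finset (Fin n), ∑ i ∈ P, x i = ∑ i ∈ Pᶜ, x i) ↔
    (∃ SY SZ SW : Finset (Fin n),
      (∑ i ∈ SY, Y i + ∑ i ∈ SZ, Z i + ∑ i ∈ SW, W i) ≡
        (∑ i ∈ SYᶜ, Y i + ∑ i ∈ SZᶜ, Z i + ∑ i ∈ SWᶜ, W i)
        [MOD (n * 2 ^ n + 1) * 8 ^ n]) := by
  set p := n * 2 ^ n + 1 with hp
  -- decomposition of the three-part sums
  have hsplit : ∀ S T U : Finset (Fin n),
      ∑ i ∈ S, Y i + ∑ i ∈ T, Z i + ∑ i ∈ U, W i =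
      8 ^ n * (∑ i ∈ S, y i + ∑ i ∈ T, z i) +
        (∑ i ∈ S, 8 ^ (i:ℕ) + ∑ i ∈ T, 2 * 8 ^ (i:ℕ) + ∑ i ∈ U, 3 * 8 ^ (i:ℕ)) := by
    intro S T U
    simp only [hY, hZ, hW, Finset.sum_add_distrib]
    rw [← Finset.sum_mul, ← Finset.sum_mul]
    ring
  -- sums of y+z are congruent to sums of x mod p
  have hsum_cong : ∀ S : Finset (Fin n),
      (∑ i ∈ S, y i + ∑ i ∈ S, z i) ≡ ∑ i ∈ S, x i [MOD p] := by
    intro S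
    rw [← Finset.sum_add_distrib]
    show (∑ i ∈ S, (y i + z i)) % p = (∑ i ∈ S, x i) % p
    rw [Finset.sum_nat_mod, Finset.sum_congr rfl (fun i (_ : i ∈ S) => hyz i),
      ← Finset.sum_nat_mod]
  -- bound on sums of x
  have hxsum : ∀ S : Finset (Fin n), ∑ i ∈ S, x i < p := by
    intro S
    have h1 : ∑ i ∈ S, x i ≤ ∑ i ∈ S, (2 ^ n - 1) :=
      Finset.sum_le_sum (fun i _ => by have := hx i; omega)
    have h2 : ∑ i ∈ S, (2 ^ n - 1) = S.card * (2 ^ n - 1) := by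
      rw [Finset.sum_const, smul_eq_mul]
    have h3 : S.card ≤ n := by
      have := Finset.card_le_univ S
      simpa using this
    have h4 : S.card * (2 ^ n - 1) ≤ n * (2 ^ n - 1) := Nat.mul_le_mul_right _ h3
    have h5 : n * (2 ^ n - 1) ≤ n * 2 ^ n := Nat.mul_le_mul_left _ (Nat.sub_le _ _)
    have h6 : ∑ i ∈ S, x i ≤ n * 2 ^ n := le_trans (le_trans (le_trans h1 (le_of_eq h2)) h4) h5
    exact Nat.lt_succ_of_le h6
  constructor
  · rintro ⟨P, hP⟩
    refine ⟨P, P, Pᶜ, ?_⟩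
    rw [compl_compl, hsplit, hsplit]
    have hlow : ∀ Q R : Finset (Fin n), R = Qᶜ →
        ∑ i ∈ Q, 8 ^ (i:ℕ) + ∑ i ∈ Q, 2 * 8 ^ (i:ℕ) + ∑ i ∈ R, 3 * 8 ^ (i:ℕ)
          = ∑ i : Fin n, 3 * 8 ^ (i:ℕ) := by
      rintro Q R rfl
      have : ∑ i ∈ Q, 8 ^ (i:ℕ) + ∑ i ∈ Q, 2 * 8 ^ (i:ℕ) = ∑ i ∈ Q, 3 * 8 ^ (i:ℕ) := by
        rw [← Finset.sum_add_distrib]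
        exact Finset.sum_congr rfl (fun i _ => by ring)
      rw [this, Finset.sum_add_sum_compl]
    rw [hlow P Pᶜ rfl, hlow Pᶜ P (compl_compl P).symm]
    refine Nat.ModEq.add_right _ ?_
    rw [mul_comm p (8 ^ n)]
    refine Nat.ModEq.mul_left' _ ?_
    calc (∑ i ∈ P, y i + ∑ i ∈ P, z i) ≡ ∑ i ∈ P, x i [MOD p] := hsum_cong P
      _ = ∑ i ∈ Pᶜ, x i := hP
      _ ≡ (∑ i ∈ Pᶜ, y i + ∑ i ∈ Pᶜ, z i) [MOD p] := (hsum_cong Pᶜ).symm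
  · rintro ⟨SY, SZ, SW, hmod⟩
    rw [hsplit, hsplit] at hmod
    -- digit functions
    set c : ℕ → ℕ := fun j =>
      if h : j < n then
        (if (⟨j, h⟩ : Fin n) ∈ SY then 1 else 0) + (if (⟨j, h⟩ : Fin n) ∈ SZ then 2 else 0)
          + (if (⟨j, h⟩ : Fin n) ∈ SW then 3 else 0)
      else 0 with hc_def
    set d : ℕ → ℕ := fun j =>
      if h : j < n then
        (if (⟨j, h⟩ : Fin n) ∈ SYᶜ then 1 else 0) + (if (⟨j, h⟩ : Fin n) ∈ SZᶜ then 2 else 0)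
          + (if (⟨j, h⟩ : Fin n) ∈ SWᶜ then 3 else 0)
      else 0 with hd_def
    have hclt : ∀ j, c j < 8 := by
      intro j; rw [hc_def]; dsimp only; split_ifs <;> omega
    have hdlt : ∀ j, d j < 8 := by
      intro j; rw [hd_def]; dsimp only; split_ifs <;> omega
    have hA : ∀ (S T U : Finset (Fin n)) (e : ℕ → ℕ),
        (e = fun j => if h : j < n then
          (if (⟨j, h⟩ : Fin n) ∈ S then 1 else 0) + (if (⟨j, h⟩ : Fin n) ∈ T then 2 else 0)
            + (if (⟨j, h⟩ : Fin n) ∈ U then 3 else 0) else 0) →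
        ∑ i ∈ S, 8 ^ (i:ℕ) + ∑ i ∈ T, 2 * 8 ^ (i:ℕ) + ∑ i ∈ U, 3 * 8 ^ (i:ℕ)
          = ∑ j ∈ Finset.range n, e j * 8 ^ j := by
      intro S T U e he
      rw [← Fin.sum_univ_eq_sum_range (fun j => e j * 8 ^ j)]
      subst he
      simp only [Fin.is_lt, dif_pos, Fin.eta]
      have key : ∀ i : Fin n,
          (((if i ∈ S then 1 else 0) + if i ∈ T then 2 else 0) + if i ∈ U then 3 else 0) * 8 ^ (i:ℕ)
          = (if i ∈ S then 8 ^ (i:ℕ) else 0) + ((if i ∈ T then 2 * 8 ^ (i:ℕ) else 0)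
              + (if i ∈ U then 3 * 8 ^ (i:ℕ) else 0)) := by
        intro i; split_ifs <;> ring
      have e0 := Finset.sum_congr rfl (fun (i : Fin n) (_ : i ∈ Finset.univ) => key i)
      rw [e0, Finset.sum_add_distrib, Finset.sum_add_distrib,
        Finset.sum_ite_mem, Finset.sum_ite_mem, Finset.sum_ite_mem,
        Finset.univ_inter, Finset.univ_inter, Finset.univ_inter]
      ring
    have hAc := hA SY SZ SW c hc_def
    have hAd := hA SYᶜ SZᶜ SWᶜ d hd_def
    rw [hAc, hAd] at hmod
    -- mod 8^n : low parts are equal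
    have h8dvd : (8:ℕ) ^ n ∣ p * 8 ^ n := dvd_mul_left _ _
    have hmod8 := Nat.ModEq.of_dvd h8dvd hmod
    have hlow_eq : (∑ j ∈ Finset.range n, c j * 8 ^ j) = ∑ j ∈ Finset.range n, d j * 8 ^ j := by
      have h1 : (∑ j ∈ Finset.range n, c j * 8 ^ j) ≡ ∑ j ∈ Finset.range n, d j * 8 ^ j [MOD 8 ^ n] := by
        have e1 : (8:ℕ) ^ n * (∑ i ∈ SY, y i + ∑ i ∈ SZ, z i) ≡ 0 [MOD 8 ^ n] :=
          (Nat.modEq_zero_iff_dvd).mpr (dvd_mul_right _ _)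
        have e2 : (8:ℕ) ^ n * (∑ i ∈ SYᶜ, y i + ∑ i ∈ SZᶜ, z i) ≡ 0 [MOD 8 ^ n] :=
          (Nat.modEq_zero_iff_dvd).mpr (dvd_mul_right _ _)
        calc (∑ j ∈ Finset.range n, c j * 8 ^ j)
            ≡ 0 + ∑ j ∈ Finset.range n, c j * 8 ^ j [MOD 8 ^ n] := by rw [zero_add]
          _ ≡ 8 ^ n * (∑ i ∈ SY, y i + ∑ i ∈ SZ, z i) + ∑ j ∈ Finset.range n, c j * 8 ^ j [MOD 8 ^ n] :=
              Nat.ModEq.add_right _ e1.symm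
          _ ≡ 8 ^ n * (∑ i ∈ SYᶜ, y i + ∑ i ∈ SZᶜ, z i) + ∑ j ∈ Finset.range n, d j * 8 ^ j [MOD 8 ^ n] := hmod8
          _ ≡ 0 + ∑ j ∈ Finset.range n, d j * 8 ^ j [MOD 8 ^ n] := Nat.ModEq.add_right _ e2
          _ = ∑ j ∈ Finset.range n, d j * 8 ^ j := by rw [zero_add]
      have b1 := geom_bound c hclt n
      have b2 := geom_bound d hdlt n
      have := h1
      unfold Nat.ModEq at this
      rw [Nat.mod_eq_of_lt b1, Nat.mod_eq_of_lt b2] at this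
      exact this
    have hdig := digits_unique n c d hclt hdlt hlow_eq
    -- membership structure
    have hmem : ∀ i : Fin n, (i ∈ SZ ↔ i ∈ SY) ∧ (i ∈ SW ↔ i ∉ SY) := by
      intro i
      have hcd := hdig (i : ℕ) i.isLt
      rw [hc_def, hd_def] at hcd
      simp only [dif_pos i.isLt, Fin.eta, Finset.mem_compl] at hcd
      by_cases h1 : i ∈ SY <;> by_cases h2 : i ∈ SZ <;> by_cases h3 : i ∈ SW <;>
        simp [h1, h2, h3] at hcd ⊢ <;> omega
    have hSZ : SZ = SY := Finset.ext (fun i => (hmem i).1)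
    have hSW : SW = SYᶜ := Finset.ext (fun i => by
      rw [Finset.mem_compl]; exact (hmem i).2)
    -- mod p
    refine ⟨SY, ?_⟩
    have hpdvd : p ∣ p * 8 ^ n := dvd_mul_right _ _
    have hmodp := Nat.ModEq.of_dvd hpdvd hmod
    rw [hlow_eq] at hmodp
    have hcancelA := Nat.ModEq.add_right_cancel' _ hmodp
    -- cancel 8^n (coprime to p)
    have hcop : Nat.Coprime (8 ^ n) p := by
      have h2 : ¬ (2 ∣ p) := by
        have hd2 : (2:ℕ) ∣ 2 ^ n := dvd_pow_self 2 (by omega)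
        have hd2' : (2:ℕ) ∣ n * 2 ^ n := hd2.mul_left n
        rw [hp]; omega
      have hcop2 : Nat.Coprime 2 p := (Nat.Prime.coprime_iff_not_dvd Nat.prime_two).mpr h2
      have h8 : (8:ℕ) = 2 ^ 3 := by norm_num
      rw [h8]
      exact (hcop2.pow_left 3).pow_left n
    have hcancel8 := Nat.ModEq.cancel_left_of_coprime hcop.symm hcancelA
    rw [hSZ] at hcancel8
    have final : (∑ i ∈ SY, x i) ≡ ∑ i ∈ SYᶜ, x i [MOD p] :=
      ((hsum_cong SY).symm.trans hcancel8).trans (hsum_cong SYᶜ)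
    have b1 := hxsum SY
    have b2 := hxsum SYᶜ
    unfold Nat.ModEq at final
    rw [Nat.mod_eq_of_lt b1, Nat.mod_eq_of_lt b2] at final
    exact final
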